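/- Let N ≥ 3 and let 0 ≤ k ≤ n be integers. Define W_{n,k} : (0,∞) → ℝ by W_{n,k}(r) = r^k (1+r²)^{−(k+(N−2)/2)} · P_{n−k}^{(k+(N−2)/2, k+(N−2)/2)}( (1−r²)/(1+r²) ). Then for every r > 0, r^{−(N−2)} · W_{n,k}(1/r) = (−1)^{n−k} · W_{n,k}(r); in particular W_{n,k} is invariant under the Kelvin transform when n−k is even and anti-invariant when n−k is odd. -/
import Mathlib


open scoped BigOperators

/-- Generalized binomial coefficient `C(a, k) = a(a-1)⋯(a-k+1)/k!`. -/
noncomputable def genBinom (a : ℝ) (k : ℕ) : ℝ :=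
  (∏ i ∈ Finset.range k, (a - i)) / (Nat.factorial k)

/-- The Jacobi polynomial `P_m^{(b,c)}`. -/
noncomputable def jacobiP (m : ℕ) (b c : ℝ) (x : ℝ) : ℝ :=
  ∑ s ∈ Finset.range (m + 1),
    genBinom ((m : ℝ) + b) s * genBinom ((m : ℝ) + c) (m - s) *
      ((x - 1) / 2) ^ (m - s) * ((x + 1) / 2) ^ s

/-- The radial profile `W_{n,k}(r) = r^k (1+r²)^{-(k+(N-2)/2)}
  P_{n-k}^{(k+(N-2)/2, k+(N-2)/2)}((1-r²)/(1+r²))`. -/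
noncomputable def Wnk (N n k : ℕ) (r : ℝ) : ℝ :=
  r ^ k * (1 + r ^ 2) ^ (-((k : ℝ) + ((N : ℝ) - 2) / 2)) *
    jacobiP (n - k) ((k : ℝ) + ((N : ℝ) - 2) / 2) ((k : ℝ) + ((N : ℝ) - 2) / 2)
      ((1 - r ^ 2) / (1 + r ^ 2))

lemma jacobiP_neg (m : ℕ) (b x : ℝ) :
    jacobiP m b b (-x) = (-1 : ℝ) ^ m * jacobiP m b b x := by
  unfold jacobiP
  rw [Finset.mul_sum,
    ← Finset.sum_range_reflect (fun s =>
      (-1 : ℝ) ^ m * (genBinom ((m : ℝ) + b) s * genBinom ((m : ℝ) + b) (m - s) *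
        ((x - 1) / 2) ^ (m - s) * ((x + 1) / 2) ^ s)) (m + 1)]
  refine Finset.sum_congr rfl fun s hs => ?_
  have hsm : s ≤ m := Nat.lt_succ_iff.mp (Finset.mem_range.mp hs)
  simp only [Nat.add_sub_cancel, Nat.sub_sub_self hsm]
  have h1 : (-x - 1) / 2 = -((x + 1) / 2) := by ring
  have h2 : (-x + 1) / 2 = -((x - 1) / 2) := by ring
  rw [h1, h2]
  rw [neg_pow ((x + 1) / 2) (m - s), neg_pow ((x - 1) / 2) s]
  have h3 : (-1 : ℝ) ^ (m - s) * (-1 : ℝ) ^ s = (-1 : ℝ) ^ m := by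
    rw [← pow_add, Nat.sub_add_cancel hsm]
  linear_combination (genBinom ((m : ℝ) + b) s * genBinom ((m : ℝ) + b) (m - s) *
    ((x + 1) / 2) ^ (m - s) * ((x - 1) / 2) ^ s) * h3

theorem statement7 (N n k : ℕ) (hN : 3 ≤ N) (hk : k ≤ n) :
    ∀ r : ℝ, 0 < r →
      r ^ (-((N : ℝ) - 2)) * Wnk N n k (1 / r) = (-1 : ℝ) ^ (n - k) * Wnk N n k r := by
  intro r hr
  have hr0 : r ≠ 0 := hr.ne'
  have h1r : (0 : ℝ) < 1 + r ^ 2 := by positivity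
  set α : ℝ := (k : ℝ) + ((N : ℝ) - 2) / 2 with hα
  have harg : (1 - (1 / r) ^ 2) / (1 + (1 / r) ^ 2) = -((1 - r ^ 2) / (1 + r ^ 2)) := by
    rw [div_eq_iff (by positivity : (0:ℝ) < 1 + (1 / r) ^ 2).ne']
    field_simp
    ring
  have hjac : jacobiP (n - k) α α ((1 - (1 / r) ^ 2) / (1 + (1 / r) ^ 2)) =
      (-1 : ℝ) ^ (n - k) * jacobiP (n - k) α α ((1 - r ^ 2) / (1 + r ^ 2)) := by
    rw [harg, jacobiP_neg]
  have hpow : r ^ (-((N : ℝ) - 2)) * ((1 / r) ^ k * (1 + (1 / r) ^ 2) ^ (-α)) =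
      r ^ k * (1 + r ^ 2) ^ (-α) := by
    have h2 : 1 + (1 / r) ^ 2 = (1 + r ^ 2) / r ^ 2 := by field_simp; ring
    have e1 : ((r ^ 2 : ℝ)) ^ (-α) = r ^ (-(2 * α)) := by
      rw [← Real.rpow_natCast r 2, ← Real.rpow_mul hr.le]
      norm_num [mul_comm]
    have e2 : (1 / r) ^ k = r ^ (-(k : ℝ)) := by
      rw [Real.rpow_neg hr.le, Real.rpow_natCast, one_div, inv_pow]
    rw [h2, Real.div_rpow h1r.le (sq_nonneg r), e1, e2,
      Real.rpow_neg hr.le (2 * α), div_eq_mul_inv, inv_inv]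
    have e3 : r ^ (-((N : ℝ) - 2)) * r ^ (-(k : ℝ)) * r ^ (2 * α) = r ^ (k : ℝ) := by
      rw [← Real.rpow_add hr, ← Real.rpow_add hr]
      congr 1
      rw [hα]; ring
    calc r ^ (-((N : ℝ) - 2)) * (r ^ (-(k : ℝ)) * ((1 + r ^ 2) ^ (-α) * r ^ (2 * α)))
        = (r ^ (-((N : ℝ) - 2)) * r ^ (-(k : ℝ)) * r ^ (2 * α)) * (1 + r ^ 2) ^ (-α) := by
          ring
      _ = r ^ k * (1 + r ^ 2) ^ (-α) := by rw [e3, Real.rpow_natCast]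
  calc r ^ (-((N : ℝ) - 2)) * Wnk N n k (1 / r)
      = (r ^ (-((N : ℝ) - 2)) * ((1 / r) ^ k * (1 + (1 / r) ^ 2) ^ (-α))) *
        jacobiP (n - k) α α ((1 - (1 / r) ^ 2) / (1 + (1 / r) ^ 2)) := by
        unfold Wnk; rw [← hα]; ring
    _ = (r ^ k * (1 + r ^ 2) ^ (-α)) *
        ((-1 : ℝ) ^ (n - k) * jacobiP (n - k) α α ((1 - r ^ 2) / (1 + r ^ 2))) := by
        rw [hpow, hjac]
    _ = (-1 : ℝ) ^ (n - k) * Wnk N n k r := by unfold Wnk; rw [← hα]; ring
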